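/- Let S be a finite set, let F be the free group on S, and let M be an F-module (an abelian group with an F-action by automorphisms). Then the first group cohomology H¹(F, M) is isomorphic to the quotient (⊕_{s∈S} M)/D, where D = {(m − s·m)_{s∈S} : m ∈ M} is the image of the homomorphism M → ⊕_{s∈S} M sending m to the tuple with s-component m − s·m. -/

import Mathlib

/-- The homomorphism `M → ⊕_{s ∈ S} M` sending `m` to the tuple `(m - s • m)_{s ∈ S}`,
whose image is the subgroup `D` of "principal relations". -/
noncomputable def statement6Map (S : Type) (M : Type) [AddCommGroup M] [Module ℤ M]
    (ρ : Representation ℤ (FreeGroup S) M) : M →+ (S → M) :=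
  AddMonoidHom.mk' (fun m s => m - ρ (FreeGroup.of s) m) (by
    intro a b
    funext s
    show (a + b) - ρ (FreeGroup.of s) (a + b) =
      (a - ρ (FreeGroup.of s) a) + (b - ρ (FreeGroup.of s) b)
    rw [map_add]
    abel)

namespace Statement6Aux

variable {S M : Type} [AddCommGroup M] [Module ℤ M]
  (ρ : Representation ℤ (FreeGroup S) M)

open groupCohomology CategoryTheory

/-- `ρ` as a hom into additive automorphisms. -/
def ρAut : FreeGroup S →* Multiplicative (AddAut M) where
  toFun g := Multiplicative.ofAdd
    { toFun := ρ g
      invFun := ρ g⁻¹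
      left_inv := fun m => by
        have : ρ g⁻¹ (ρ g m) = ρ (g⁻¹ * g) m := by rw [map_mul]; rfl
        rw [this, inv_mul_cancel, map_one]; rfl
      right_inv := fun m => by
        have : ρ g (ρ g⁻¹ m) = ρ (g * g⁻¹) m := by rw [map_mul]; rfl
        rw [this, mul_inv_cancel, map_one]; rfl
      map_add' := map_add _ }
  map_one' := by apply AddEquiv.ext; intro m; show ρ 1 m = m; rw [map_one]; rfl
  map_mul' a b := by
    apply AddEquiv.ext; intro m; show ρ (a * b) m = ρ a (ρ b m); rw [map_mul]; rfl

/-- `ρ` as a hom into multiplicative automorphisms of `Multiplicative M`. -/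
def ρMulAut : FreeGroup S →* MulAut (Multiplicative M) where
  toFun g := AddEquiv.toMultiplicative (Multiplicative.toAdd (ρAut ρ g))
  map_one' := by ext m; show ρ 1 m.toAdd = m.toAdd; rw [map_one]; rfl
  map_mul' a b := by
    ext m; show ρ (a * b) m.toAdd = ρ a (ρ b m.toAdd); rw [map_mul]; rfl

/-- The 1-coboundaries as a submodule of the 1-cocycles. -/
abbrev cobSub {R : Type} [Ring R] (T : ShortComplex (ModuleCat.{0} R)) :
    Submodule R (LinearMap.ker T.g.hom) :=
  LinearMap.range T.moduleCatToCycles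

/-- The 1-coboundaries as a submodule of the 1-cocycles. -/
abbrev oneCoboundaries {G : Type} [Group G] (A : Rep ℤ G) :
    @Submodule ℤ (cocycles₁ A) Int.instSemiring _ (Submodule.module _) := cobSub (shortComplexH1 A)

lemma mem_oneCoboundaries_iff {G : Type} [Group G] {A : Rep ℤ G} (f : cocycles₁ A) :
    f ∈ oneCoboundaries A ↔ ∃ x : A, ∀ g : G, A.ρ g x - x = f g := by
  change (∃ y, (shortComplexH1 A).moduleCatToCycles y = f) ↔ _
  constructor
  · rintro ⟨x, hx⟩
    exact ⟨x, fun g => by subst hx; rfl⟩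
  · rintro ⟨x, hx⟩
    exact ⟨x, Subtype.ext (funext hx)⟩

/-- Restriction of a 1-cocycle to the generators, as an `AddMonoidHom`. -/
noncomputable def restrictCocycle : cocycles₁ (Rep.of ρ) →+ (S → M) :=
  AddMonoidHom.mk' (fun f s => f.1 (FreeGroup.of s)) (fun _ _ => rfl)

lemma restrictCocycle_injective : Function.Injective (restrictCocycle ρ) := by
  rw [injective_iff_map_eq_zero]
  intro f hf
  have hf' : ∀ s : S, f.1 (FreeGroup.of s) = 0 := fun s => congrFun hf s
  have hmul := (mem_cocycles₁_iff (A := Rep.of ρ) f.1).1 f.2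
  have h0 : f.1 1 = 0 := cocycles₁_map_one f
  apply Subtype.ext
  funext g
  show f.1 g = 0
  induction g using FreeGroup.induction_on with
  | C1 => exact h0
  | of s => exact hf' s
  | inv_of s _ =>
      have h1 := hmul (FreeGroup.of s)⁻¹ (FreeGroup.of s)
      rw [inv_mul_cancel, h0, hf' s, map_zero, zero_add] at h1
      show f.1 (FreeGroup.of s)⁻¹ = 0
      exact h1.symm
  | mul g h ihg ihh =>
      show f.1 (g * h) = 0
      rw [hmul g h, ihg, ihh, map_zero, add_zero]

lemma restrictCocycle_surjective : Function.Surjective (restrictCocycle ρ) := by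
  intro v
  set φ := ρMulAut ρ
  set L : FreeGroup S →* Multiplicative M ⋊[φ] FreeGroup S :=
    FreeGroup.lift fun s =>
      SemidirectProduct.inl (Multiplicative.ofAdd (v s)) * SemidirectProduct.inr (FreeGroup.of s)
  have hright : ∀ g : FreeGroup S, (L g).right = g := by
    intro g
    have : SemidirectProduct.rightHom.comp L = MonoidHom.id (FreeGroup S) := by
      apply FreeGroup.ext_hom
      intro s
      simp [L]
    exact congrFun (congrArg (fun h => h.toFun) this) g
  set f : FreeGroup S → M := fun g => Multiplicative.toAdd (L g).left
  have hf : f ∈ cocycles₁ (Rep.of ρ) := by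
    rw [mem_cocycles₁_iff (A := Rep.of ρ)]
    intro g h
    show Multiplicative.toAdd (L (g * h)).left
      = ρ g (Multiplicative.toAdd (L h).left) + Multiplicative.toAdd (L g).left
    rw [map_mul, SemidirectProduct.mul_left, hright]
    show Multiplicative.toAdd (L g).left + Multiplicative.toAdd (φ g (L h).left) = _
    have hφ : Multiplicative.toAdd (φ g (L h).left)
        = ρ g (Multiplicative.toAdd (L h).left) := rfl
    rw [hφ]
    abel
  refine ⟨⟨f, hf⟩, ?_⟩
  funext s
  show Multiplicative.toAdd (L (FreeGroup.of s)).left = v s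
  have hL : L (FreeGroup.of s) =
      SemidirectProduct.inl (Multiplicative.ofAdd (v s))
        * SemidirectProduct.inr (FreeGroup.of s) := by
    simp [L]
  rw [hL, SemidirectProduct.mul_left]
  simp

/-- The restriction additive equivalence. -/
noncomputable def restrictEquiv : cocycles₁ (Rep.of ρ) ≃+ (S → M) :=
  AddEquiv.ofBijective (restrictCocycle ρ)
    ⟨restrictCocycle_injective ρ, restrictCocycle_surjective ρ⟩

lemma map_oneCoboundaries :
    ((oneCoboundaries (Rep.of ρ)).toAddSubgroup).map
        (AddMonoidHomClass.toAddMonoidHom (restrictEquiv ρ))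
      = (statement6Map S M ρ).range := by
  ext v
  constructor
  · rintro ⟨f, hf, rfl⟩
    obtain ⟨m, hm⟩ := (mem_oneCoboundaries_iff f).1 hf
    have hmm : ∀ s : S, f.1 (FreeGroup.of s) = (Rep.of ρ).ρ (FreeGroup.of s) m - m := by
      intro s
      exact (hm (FreeGroup.of s)).symm
    refine ⟨-m, funext fun s => ?_⟩
    show statement6Map S M ρ (-m) s = f.1 (FreeGroup.of s)
    rw [hmm s]
    show (-m) - (Rep.of ρ).ρ (FreeGroup.of s) (-m) = (Rep.of ρ).ρ (FreeGroup.of s) m - m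
    rw [map_neg]
    abel
  · rintro ⟨m, rfl⟩
    have hc : (fun g => ρ g (-m) - (-m) : FreeGroup S → M)
        ∈ cocycles₁ (Rep.of ρ) := by
      rw [mem_cocycles₁_iff (A := Rep.of ρ)]
      intro g h
      show ρ (g * h) (-m) - (-m) = ρ g (ρ h (-m) - (-m)) + (ρ g (-m) - (-m))
      have hgh : ρ (g * h) (-m : M) = ρ g (ρ h (-m : M)) := by rw [map_mul]; rfl
      rw [hgh, map_sub]
      abel
    refine ⟨⟨_, hc⟩, (mem_oneCoboundaries_iff (A := Rep.of ρ) ⟨_, hc⟩).2 ⟨-m, fun g => rfl⟩, ?_⟩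
    funext s
    show ρ (FreeGroup.of s) (-m) - (-m) = m - ρ (FreeGroup.of s) m
    rw [map_neg]
    abel

/-- Quotient by a submodule equals quotient by the corresponding subgroup. -/
def quotEquivAddSubgroup {N : Type*} [AddCommGroup N] [Module ℤ N] (p : Submodule ℤ N)
    (H : AddSubgroup N) (h : p.toAddSubgroup = H) : (N ⧸ p) ≃+ N ⧸ H := by
  subst h
  exact AddEquiv.refl _

/-- An iso in `ModuleCat ℤ` gives an additive equivalence. -/
def isoToAddEquiv {X Y : ModuleCat ℤ} (e : X ≅ Y) : X ≃+ Y where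
  toFun := e.hom
  invFun := e.inv
  left_inv x := by
    change (e.hom ≫ e.inv) x = x
    rw [e.hom_inv_id]
    rfl
  right_inv y := by
    change (e.inv ≫ e.hom) y = y
    rw [e.inv_hom_id]
    rfl
  map_add' := map_add _

end Statement6Aux

open Statement6Aux in
/-- Let `F` be the free group on a finite set `S` and `M` an `F`-module.
Then `H¹(F, M)` is isomorphic to `(⊕_{s ∈ S} M) ⧸ D`, where
`D = {(m - s • m)_{s ∈ S} : m ∈ M}`. -/
theorem statement6 (S : Type) [Finite S] (M : Type) [AddCommGroup M] [Module ℤ M]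
    (ρ : Representation ℤ (FreeGroup S) M) :
    Nonempty ((groupCohomology (Rep.of ρ) 1) ≃+
      ((S → M) ⧸ (statement6Map S M ρ).range)) := by
  have e1 := isoToAddEquiv (groupCohomology.H1Iso (Rep.of ρ))
  have e2 := @quotEquivAddSubgroup (groupCohomology.cocycles₁ (Rep.of ρ)) (Submodule.addCommGroup _)
    (Submodule.module _)
    (oneCoboundaries (Rep.of ρ)) _ rfl
  have e3 := QuotientAddGroup.congr _ _ (restrictEquiv ρ) (map_oneCoboundaries ρ)
  exact ⟨(e1.trans e2).trans e3⟩
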